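/- Let n ≥ 3. The maximum cardinality of an arrangement of smallest positive minors in Gr^≥(2,n), and likewise the maximum cardinality of an arrangement of largest positive minors in Gr^≥(2,n), equals 3m² if n = 3m, equals m(3m+2) if n = 3m+1, and equals (m+1)(3m+1) if n = 3m+2 (equivalently, it equals ⌊n²/3⌋). -/

import Mathlib

set_option maxHeartbeats 1000000


namespace Stmt18

/-- The `2×2` minor of a `2×n` matrix on columns `i < j`. -/
def minor2 (n : ℕ) (A : Matrix (Fin 2) (Fin n) ℝ) (i j : Fin n) : ℝ :=
  A 0 i * A 1 j - A 0 j * A 1 i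

/-- `A` represents a point of the nonnegative Grassmannian `Gr^≥(2,n)`:
a rank-2 matrix all of whose `2×2` minors (on columns `i < j`) are nonnegative. -/
def NonnegGr2 (n : ℕ) (A : Matrix (Fin 2) (Fin n) ℝ) : Prop :=
  A.rank = 2 ∧ ∀ i j : Fin n, i < j → 0 ≤ minor2 n A i j

/-- An arrangement of smallest positive minors in `Gr^≥(2,n)`. -/
def IsArrSmallestPos (n : ℕ) (𝒜 : Finset (Finset (Fin n))) : Prop :=
  (∀ e ∈ 𝒜, e.card = 2) ∧
    ∃ (A : Matrix (Fin 2) (Fin n) ℝ) (v : ℝ), NonnegGr2 n A ∧ 0 < v ∧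
      (∀ i j : Fin n, i < j → {i, j} ∈ 𝒜 → minor2 n A i j = v) ∧
      (∀ i j : Fin n, i < j → {i, j} ∉ 𝒜 →
        minor2 n A i j = 0 ∨ v < minor2 n A i j)

/-- An arrangement of largest positive minors in `Gr^≥(2,n)`. -/
def IsArrLargestPos (n : ℕ) (𝒜 : Finset (Finset (Fin n))) : Prop :=
  (∀ e ∈ 𝒜, e.card = 2) ∧
    ∃ (A : Matrix (Fin 2) (Fin n) ℝ) (v : ℝ), NonnegGr2 n A ∧ 0 < v ∧
      (∀ i j : Fin n, i < j → {i, j} ∈ 𝒜 → minor2 n A i j = v) ∧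
      (∀ i j : Fin n, i < j → {i, j} ∉ 𝒜 → minor2 n A i j < v)

open Finset

/-! ### auxiliary material -/

lemma aux_pair_eq {α : Type*} [DecidableEq α] {x y x' y' : α}
    (h : ({x, y} : Finset α) = {x', y'}) (hxy : x ≠ y) :
    (x = x' ∧ y = y') ∨ (x = y' ∧ y = x') := by
  have hx : x ∈ ({x', y'} : Finset α) := h ▸ (by simp)
  have hy : y ∈ ({x', y'} : Finset α) := h ▸ (by simp)
  have hx' : x' ∈ ({x, y} : Finset α) := h ▸ (by simp)
  simp only [Finset.mem_insert, Finset.mem_singleton] at hx hy hx'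
  rcases hx with rfl | rfl <;> rcases hy with rfl | rfl <;> simp_all

/-- The graph associated to a collection of 2-element subsets. -/
def graphOf (n : ℕ) (𝒜 : Finset (Finset (Fin n))) : SimpleGraph (Fin n) where
  Adj x y := x ≠ y ∧ {x, y} ∈ 𝒜
  symm := by
    constructor
    intro x y h
    exact ⟨h.1.symm, by rw [Finset.pair_comm]; exact h.2⟩
  loopless := ⟨fun x h => h.1 rfl⟩

instance (n : ℕ) (𝒜 : Finset (Finset (Fin n))) : DecidableRel (graphOf n 𝒜).Adj := by
  intro x y; unfold graphOf; simp only; infer_instance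

lemma card_edgeFinset_graphOf {n : ℕ} {𝒜 : Finset (Finset (Fin n))}
    (h2 : ∀ e ∈ 𝒜, e.card = 2) :
    (graphOf n 𝒜).edgeFinset.card = 𝒜.card := by
  classical
  apply Finset.card_nbij
    (fun z => Sym2.lift ⟨fun x y => ({x, y} : Finset (Fin n)),
      fun _ _ => Finset.pair_comm _ _⟩ z)
  · intro z hz
    induction z with
    | _ x y =>
      rw [Finset.mem_coe, SimpleGraph.mem_edgeFinset, SimpleGraph.mem_edgeSet] at hz
      simpa using hz.2
  · intro z hz w hw he
    induction z with
    | _ x y =>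
      induction w with
      | _ x' y' =>
        rw [Finset.mem_coe, SimpleGraph.mem_edgeFinset, SimpleGraph.mem_edgeSet] at hz hw
        simp only [Sym2.lift_mk] at he
        rcases aux_pair_eq he hz.1 with ⟨rfl, rfl⟩ | ⟨rfl, rfl⟩
        · rfl
        · exact Sym2.eq_swap
  · intro e he
    rw [Finset.mem_coe] at he
    obtain ⟨x, y, hxy, rfl⟩ := Finset.card_eq_two.1 (h2 e he)
    refine ⟨s(x, y), ?_, by simp⟩
    rw [Finset.mem_coe, SimpleGraph.mem_edgeFinset, SimpleGraph.mem_edgeSet]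
    exact ⟨hxy, he⟩

lemma minor2_antisymm (n : ℕ) (A : Matrix (Fin 2) (Fin n) ℝ) (i j : Fin n) :
    minor2 n A i j = -minor2 n A j i := by
  unfold minor2; ring

lemma plucker (n : ℕ) (A : Matrix (Fin 2) (Fin n) ℝ) (i j k l : Fin n) :
    minor2 n A i k * minor2 n A j l =
      minor2 n A i j * minor2 n A k l + minor2 n A i l * minor2 n A j k := by
  unfold minor2; ring

lemma cliqueFree_of_minors {n : ℕ} {𝒜 : Finset (Finset (Fin n))}
    {A : Matrix (Fin 2) (Fin n) ℝ} {v : ℝ} (hv : 0 < v)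
    (hmem : ∀ i j : Fin n, i < j → {i, j} ∈ 𝒜 → minor2 n A i j = v) :
    (graphOf n 𝒜).CliqueFree 4 := by
  intro s hs
  rw [SimpleGraph.isNClique_iff] at hs
  obtain ⟨hcl, hcard⟩ := hs
  -- extract four distinct elements
  obtain ⟨x, hx⟩ := Finset.card_pos.1 (by omega : 0 < s.card)
  have h1 : 0 < (s.erase x).card := by
    rw [Finset.card_erase_of_mem hx]; omega
  obtain ⟨y, hy⟩ := Finset.card_pos.1 h1
  have h2 : 0 < ((s.erase x).erase y).card := by
    rw [Finset.card_erase_of_mem hy, Finset.card_erase_of_mem hx]; omega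
  obtain ⟨z, hz⟩ := Finset.card_pos.1 h2
  have h3 : 0 < (((s.erase x).erase y).erase z).card := by
    rw [Finset.card_erase_of_mem hz, Finset.card_erase_of_mem hy,
      Finset.card_erase_of_mem hx]; omega
  obtain ⟨w, hw⟩ := Finset.card_pos.1 h3
  have hws : w ∈ s := Finset.mem_of_mem_erase (Finset.mem_of_mem_erase
    (Finset.mem_of_mem_erase hw))
  have hzs : z ∈ s := Finset.mem_of_mem_erase (Finset.mem_of_mem_erase hz)
  have hys : y ∈ s := Finset.mem_of_mem_erase hy
  have hyx : y ≠ x := Finset.ne_of_mem_erase hy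
  have hzy : z ≠ y := Finset.ne_of_mem_erase hz
  have hzx : z ≠ x := Finset.ne_of_mem_erase (Finset.mem_of_mem_erase hz)
  have hwz : w ≠ z := Finset.ne_of_mem_erase hw
  have hwy : w ≠ y := Finset.ne_of_mem_erase (Finset.mem_of_mem_erase hw)
  have hwx : w ≠ x := Finset.ne_of_mem_erase (Finset.mem_of_mem_erase
    (Finset.mem_of_mem_erase hw))
  -- every adjacent pair has minor ±v
  have key : ∀ p q : Fin n, p ∈ s → q ∈ s → p ≠ q →
      minor2 n A p q = v ∨ minor2 n A p q = -v := by
    intro p q hp hq hpq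
    have hadj : (graphOf n 𝒜).Adj p q := hcl hp hq hpq
    rcases lt_or_gt_of_ne hpq with h | h
    · exact Or.inl (hmem p q h hadj.2)
    · right
      rw [minor2_antisymm]
      have : {q, p} ∈ 𝒜 := by rw [Finset.pair_comm]; exact hadj.2
      rw [hmem q p h this]
  have P := plucker n A x y z w
  rcases key x z hx hzs hzx.symm with h1 | h1 <;>
  rcases key y w hys hws hwy.symm with h2 | h2 <;>
  rcases key x y hx hys hyx.symm with h3 | h3 <;>
  rcases key z w hzs hws hwz.symm with h4 | h4 <;>
  rcases key x w hx hws hwx.symm with h5 | h5 <;>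
  rcases key y z hys hzs hzy.symm with h6 | h6 <;>
  rw [h1, h2, h3, h4, h5, h6] at P <;> nlinarith

/-! ### the construction -/

/-- block function -/
def gfun (a b t : ℕ) : ℕ := if t < a then 0 else if t < a + b then 1 else 2

section Construction

variable (n : ℕ)

/-- sizes of the three blocks -/
def aa : ℕ := (n + 2) / 3
def bb : ℕ := (n + 1) / 3
def cc : ℕ := n / 3

lemma abc_sum : aa n + bb n + cc n = n := by unfold aa bb cc; omega

/-- block of a column index -/
def gg (i : Fin n) : ℕ := gfun (aa n) (bb n) i.val

lemma gg_cases (i : Fin n) : gg n i = 0 ∨ gg n i = 1 ∨ gg n i = 2 := by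
  unfold gg gfun; split_ifs <;> simp

lemma gg_mono {i j : Fin n} (h : i < j) : gg n i ≤ gg n j := by
  have : (i : ℕ) < (j : ℕ) := h
  unfold gg gfun; split_ifs <;> omega

lemma gg_ne_imp {i j : Fin n} (h : gg n i ≠ gg n j) : i ≠ j := fun he => h (he ▸ rfl)

/-- the arrangement -/
def Arr : Finset (Finset (Fin n)) :=
  ((Finset.univ : Finset (Fin n × Fin n)).filter fun p => gg n p.1 < gg n p.2).image
    fun p => ({p.1, p.2} : Finset (Fin n))

lemma mem_Arr (x y : Fin n) : ({x, y} : Finset (Fin n)) ∈ Arr n ↔ gg n x ≠ gg n y := by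
  constructor
  · intro h
    obtain ⟨p, hp, hpe⟩ := Finset.mem_image.1 h
    rw [Finset.mem_filter] at hp
    have hne : p.1 ≠ p.2 := fun he => absurd (he ▸ hp.2) (lt_irrefl _)
    rcases aux_pair_eq hpe hne with ⟨h1, h2⟩ | ⟨h1, h2⟩
    · rw [← h1, ← h2]; exact ne_of_lt hp.2
    · rw [← h1, ← h2]; exact (ne_of_lt hp.2).symm
  · intro h
    rcases lt_or_gt_of_ne h with hlt | hgt
    · exact Finset.mem_image.2 ⟨(x, y), Finset.mem_filter.2 ⟨Finset.mem_univ _, hlt⟩, rfl⟩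
    · exact Finset.mem_image.2 ⟨(y, x), Finset.mem_filter.2 ⟨Finset.mem_univ _, hgt⟩,
        by rw [Finset.pair_comm]⟩

lemma Arr_card2 : ∀ e ∈ Arr n, e.card = 2 := by
  intro e he
  obtain ⟨p, hp, rfl⟩ := Finset.mem_image.1 he
  rw [Finset.mem_filter] at hp
  exact Finset.card_pair (fun he' => absurd (he' ▸ hp.2) (lt_irrefl _))

/-- counting: card of a block -/
lemma card_block (p : Fin n → Prop) [DecidablePred p] (lo hi : ℕ) (hhi : hi ≤ n)
    (hp : ∀ i : Fin n, p i ↔ (lo ≤ i.val ∧ i.val < hi)) :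
    ((Finset.univ : Finset (Fin n)).filter p).card = hi - lo := by
  rw [← Nat.card_Ico lo hi]
  apply Finset.card_nbij (fun i => i.val)
  · intro i hi'
    rw [Finset.mem_coe, Finset.mem_filter] at hi'
    rw [Finset.mem_coe, Finset.mem_Ico]
    exact (hp i).1 hi'.2
  · exact fun i _ j _ h => Fin.val_injective h
  · intro t ht
    rw [Finset.mem_coe, Finset.mem_Ico] at ht
    have htn : t < n := lt_of_lt_of_le ht.2 hhi
    refine ⟨⟨t, htn⟩, ?_, rfl⟩
    rw [Finset.mem_coe, Finset.mem_filter]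
    exact ⟨Finset.mem_univ _, (hp _).2 ⟨ht.1, ht.2⟩⟩

lemma gg_iff (i : Fin n) :
    (gg n i = 0 ↔ i.val < aa n) ∧ (gg n i = 1 ↔ aa n ≤ i.val ∧ i.val < aa n + bb n) ∧
      (gg n i = 2 ↔ aa n + bb n ≤ i.val) := by
  unfold gg gfun
  split_ifs with h1 h2 <;> refine ⟨?_, ?_, ?_⟩ <;> simp <;> omega

lemma card_Arr : (Arr n).card = aa n * bb n + aa n * cc n + bb n * cc n := by
  classical
  have habc := abc_sum n
  rw [Arr, Finset.card_image_of_injOn]; swap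
  · intro p hp q hq he
    rw [Finset.mem_coe, Finset.mem_filter] at hp hq
    have hne : p.1 ≠ p.2 := fun h => absurd (h ▸ hp.2) (lt_irrefl _)
    rcases aux_pair_eq he hne with ⟨h1, h2⟩ | ⟨h1, h2⟩
    · exact Prod.ext h1 h2
    · exfalso; rw [← h1, ← h2] at hq; exact absurd hp.2 (asymm hq.2)
  set B0 := (Finset.univ : Finset (Fin n)).filter (fun i => gg n i = 0) with hB0
  set B1 := (Finset.univ : Finset (Fin n)).filter (fun i => gg n i = 1) with hB1
  set B2 := (Finset.univ : Finset (Fin n)).filter (fun i => gg n i = 2) with hB2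
  have hc0 : B0.card = aa n := by
    rw [hB0, card_block n _ 0 (aa n) (by omega)
      (fun i => by rw [(gg_iff n i).1]; omega)]
    omega
  have hc1 : B1.card = bb n := by
    rw [hB1, card_block n _ (aa n) (aa n + bb n) (by omega)
      (fun i => (gg_iff n i).2.1)]
    omega
  have hc2 : B2.card = cc n := by
    rw [hB2, card_block n _ (aa n + bb n) n (by omega)
      (fun i => by rw [(gg_iff n i).2.2]; have := i.isLt; omega)]
    omega
  have hsplit : ((Finset.univ : Finset (Fin n × Fin n)).filter fun p => gg n p.1 < gg n p.2)
      = (B0 ×ˢ B1) ∪ (B0 ×ˢ B2) ∪ (B1 ×ˢ B2) := by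
    ext ⟨x, y⟩
    simp only [Finset.mem_filter, Finset.mem_univ, true_and, Finset.mem_union,
      Finset.mem_product, hB0, hB1, hB2]
    have hx := gg_cases n x
    have hy := gg_cases n y
    omega
  rw [hsplit]
  have d1 : Disjoint (B0 ×ˢ B1) (B0 ×ˢ B2) := by
    rw [Finset.disjoint_left]
    rintro ⟨x, y⟩ h1 h2
    simp only [Finset.mem_product, hB1, hB2, Finset.mem_filter] at h1 h2
    omega
  have d2 : Disjoint ((B0 ×ˢ B1) ∪ (B0 ×ˢ B2)) (B1 ×ˢ B2) := by
    rw [Finset.disjoint_left]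
    rintro ⟨x, y⟩ h1 h2
    simp only [Finset.mem_union, Finset.mem_product, hB0, hB1, hB2, Finset.mem_filter] at h1 h2
    omega
  rw [Finset.card_union_of_disjoint d2, Finset.card_union_of_disjoint d1,
    Finset.card_product, Finset.card_product, Finset.card_product, hc0, hc1, hc2]

/-- the matrix realizing the arrangement -/
def AA : Matrix (Fin 2) (Fin n) ℝ :=
  Matrix.of fun r i => if r = 0 then (if gg n i ≤ 1 then 1 else 0)
    else (if gg n i = 0 then 0 else 1)

lemma minor_AA {i j : Fin n} (h : i < j) :
    minor2 n (AA n) i j = if gg n i = gg n j then 0 else 1 := by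
  have hle := gg_mono n h
  have hi := gg_cases n i
  have hj := gg_cases n j
  unfold minor2 AA
  simp only [Matrix.of_apply, if_pos rfl, one_ne_zero, if_neg (by decide : (1 : Fin 2) ≠ 0)]
  rcases hi with hi | hi | hi <;> rcases hj with hj | hj | hj <;>
    rw [hi, hj] <;> norm_num <;> omega

lemma rank_AA (hn : 3 ≤ n) : (AA n).rank = 2 := by
  have habc := abc_sum n
  have ha1 : 1 ≤ aa n := by unfold aa; omega
  have hc1 : 1 ≤ cc n := by unfold cc; omega
  have h0n : 0 < n := by omega
  -- columns at index 0 and n-1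
  set i0 : Fin n := ⟨0, h0n⟩ with hi0
  set i1 : Fin n := ⟨n - 1, by omega⟩ with hi1
  have hg0 : gg n i0 = 0 := by unfold gg gfun; simp only [hi0]; rw [if_pos]; exact ha1
  have hg1 : gg n i1 = 2 := by
    unfold gg gfun
    rw [if_neg, if_neg] <;> simp only [hi1] <;> omega
  have hcol0 : (AA n).transpose i0 = fun r => if r = 0 then 1 else 0 := by
    funext r
    fin_cases r <;> simp [AA, hg0]
  have hcol1 : (AA n).transpose i1 = fun r => if r = 0 then 0 else 1 := by
    funext r
    fin_cases r <;> simp [AA, hg1]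
  rw [Matrix.rank_eq_finrank_span_cols]
  have hspan : Submodule.span ℝ (Set.range (AA n).transpose) = ⊤ := by
    rw [eq_top_iff]
    rintro x -
    have hx : x = x 0 • (fun r : Fin 2 => if r = 0 then (1:ℝ) else 0)
        + x 1 • (fun r : Fin 2 => if r = 0 then (0:ℝ) else 1) := by
      funext r
      fin_cases r <;> simp
    rw [hx]
    apply Submodule.add_mem
    · exact Submodule.smul_mem _ _ (Submodule.subset_span ⟨i0, hcol0⟩)
    · exact Submodule.smul_mem _ _ (Submodule.subset_span ⟨i1, hcol1⟩)
  change Module.finrank ℝ (Submodule.span ℝ (Set.range (AA n).transpose)) = 2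
  rw [hspan, finrank_top, Module.finrank_pi]
  simp

lemma arr_smallest (hn : 3 ≤ n) : IsArrSmallestPos n (Arr n) := by
  refine ⟨Arr_card2 n, AA n, 1, ⟨rank_AA n hn, ?_⟩, one_pos, ?_, ?_⟩
  · intro i j hij
    rw [minor_AA n hij]
    split_ifs <;> norm_num
  · intro i j hij hm
    rw [minor_AA n hij, if_neg ((mem_Arr n i j).1 hm)]
  · intro i j hij hm
    left
    rw [minor_AA n hij, if_pos]
    by_contra h
    exact hm ((mem_Arr n i j).2 h)

lemma arr_largest (hn : 3 ≤ n) : IsArrLargestPos n (Arr n) := by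
  refine ⟨Arr_card2 n, AA n, 1, ⟨rank_AA n hn, ?_⟩, one_pos, ?_, ?_⟩
  · intro i j hij
    rw [minor_AA n hij]
    split_ifs <;> norm_num
  · intro i j hij hm
    rw [minor_AA n hij, if_neg ((mem_Arr n i j).1 hm)]
  · intro i j hij hm
    rw [minor_AA n hij, if_pos]
    · norm_num
    · by_contra h
      exact hm ((mem_Arr n i j).2 h)

/-! ### isomorphism with the Turán graph -/

def Fval (t : ℕ) : ℕ :=
  if t < aa n then 3 * t else if t < aa n + bb n then 3 * (t - aa n) + 1
    else 3 * (t - aa n - bb n) + 2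

lemma Fval_lt {t : ℕ} (ht : t < n) : Fval n t < n := by
  have habc := abc_sum n
  unfold Fval
  unfold aa bb cc at *
  split_ifs <;> omega

lemma Fval_mod (t : ℕ) : Fval n t % 3 = gfun (aa n) (bb n) t := by
  unfold Fval gfun
  split_ifs <;> omega

lemma Fval_inj {s t : ℕ} (hs : s < n) (ht : t < n) (h : Fval n s = Fval n t) : s = t := by
  unfold Fval at h
  split_ifs at h <;> omega

def FF : Fin n → Fin n := fun i => ⟨Fval n i.val, Fval_lt n i.isLt⟩

lemma FF_bij : Function.Bijective (FF n) := by
  apply Finite.injective_iff_bijective.1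
  intro s t h
  exact Fin.val_injective (Fval_inj n s.isLt t.isLt (congrArg Fin.val h))

noncomputable def isoTuran : graphOf n (Arr n) ≃g SimpleGraph.turanGraph n 3 where
  toEquiv := Equiv.ofBijective (FF n) (FF_bij n)
  map_rel_iff' := by
    intro x y
    show (SimpleGraph.turanGraph n 3).Adj (FF n x) (FF n y) ↔ (graphOf n (Arr n)).Adj x y
    have hx : ((FF n x : Fin n) : ℕ) % 3 = gg n x := Fval_mod n x.val
    have hy : ((FF n y : Fin n) : ℕ) % 3 = gg n y := Fval_mod n y.val
    constructor
    · intro h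
      have hne : gg n x ≠ gg n y := by
        rw [← hx, ← hy]; exact h
      exact ⟨gg_ne_imp n hne, (mem_Arr n x y).2 hne⟩
    · intro h
      have hne : gg n x ≠ gg n y := (mem_Arr n x y).1 h.2
      show ((FF n x : Fin n) : ℕ) % 3 ≠ ((FF n y : Fin n) : ℕ) % 3
      rw [hx, hy]; exact hne

/-! ### the upper bound -/

lemma upper_bound (hn : 3 ≤ n) {𝒜 : Finset (Finset (Fin n))}
    (h2 : ∀ e ∈ 𝒜, e.card = 2) {A : Matrix (Fin 2) (Fin n) ℝ} {v : ℝ} (hv : 0 < v)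
    (hmem : ∀ i j : Fin n, i < j → {i, j} ∈ 𝒜 → minor2 n A i j = v) :
    𝒜.card ≤ aa n * bb n + aa n * cc n + bb n * cc n := by
  classical
  have hcf : (graphOf n 𝒜).CliqueFree 4 := cliqueFree_of_minors hv hmem
  have htm : (graphOf n (Arr n)).IsTuranMaximal 3 :=
    SimpleGraph.isTuranMaximal_of_iso (isoTuran n) (by norm_num)
  calc 𝒜.card = (graphOf n 𝒜).edgeFinset.card := (card_edgeFinset_graphOf h2).symm
    _ ≤ (graphOf n (Arr n)).edgeFinset.card := htm.2 hcf
    _ = (Arr n).card := card_edgeFinset_graphOf (Arr_card2 n)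
    _ = _ := card_Arr n

end Construction

lemma isGreatest_both (n : ℕ) (hn : 3 ≤ n) (T : ℕ)
    (hT : T = aa n * bb n + aa n * cc n + bb n * cc n) :
    IsGreatest {N : ℕ | ∃ 𝒜, IsArrSmallestPos n 𝒜 ∧ 𝒜.card = N} T ∧
    IsGreatest {N : ℕ | ∃ 𝒜, IsArrLargestPos n 𝒜 ∧ 𝒜.card = N} T := by
  subst hT
  constructor
  · constructor
    · exact ⟨Arr n, arr_smallest n hn, card_Arr n⟩
    · rintro N ⟨𝒜, ⟨h2, A, v, _, hv, hmem, _⟩, rfl⟩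
      exact upper_bound n hn h2 hv hmem
  · constructor
    · exact ⟨Arr n, arr_largest n hn, card_Arr n⟩
    · rintro N ⟨𝒜, ⟨h2, A, v, _, hv, hmem, _⟩, rfl⟩
      exact upper_bound n hn h2 hv hmem

theorem max_size_arrangements_nonneg_Gr2n (n m : ℕ) (hn : 3 ≤ n) :
    (n = 3 * m →
      IsGreatest {N : ℕ | ∃ 𝒜, IsArrSmallestPos n 𝒜 ∧ 𝒜.card = N} (3 * m ^ 2) ∧
      IsGreatest {N : ℕ | ∃ 𝒜, IsArrLargestPos n 𝒜 ∧ 𝒜.card = N} (3 * m ^ 2)) ∧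
    (n = 3 * m + 1 →
      IsGreatest {N : ℕ | ∃ 𝒜, IsArrSmallestPos n 𝒜 ∧ 𝒜.card = N} (m * (3 * m + 2)) ∧
      IsGreatest {N : ℕ | ∃ 𝒜, IsArrLargestPos n 𝒜 ∧ 𝒜.card = N} (m * (3 * m + 2))) ∧
    (n = 3 * m + 2 →
      IsGreatest {N : ℕ | ∃ 𝒜, IsArrSmallestPos n 𝒜 ∧ 𝒜.card = N} ((m + 1) * (3 * m + 1)) ∧
      IsGreatest {N : ℕ | ∃ 𝒜, IsArrLargestPos n 𝒜 ∧ 𝒜.card = N} ((m + 1) * (3 * m + 1))) := by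
  refine ⟨fun h => ?_, fun h => ?_, fun h => ?_⟩
  · apply isGreatest_both n hn
    subst h
    unfold aa bb cc
    have h1 : (3 * m + 2) / 3 = m := by omega
    have h2 : (3 * m + 1) / 3 = m := by omega
    have h3 : (3 * m) / 3 = m := by omega
    rw [h1, h2, h3]; ring
  · apply isGreatest_both n hn
    subst h
    unfold aa bb cc
    have h1 : (3 * m + 1 + 2) / 3 = m + 1 := by omega
    have h2 : (3 * m + 1 + 1) / 3 = m := by omega
    have h3 : (3 * m + 1) / 3 = m := by omega
    rw [h1, h2, h3]; ring
  · apply isGreatest_both n hn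
    subst h
    unfold aa bb cc
    have h1 : (3 * m + 2 + 2) / 3 = m + 1 := by omega
    have h2 : (3 * m + 2 + 1) / 3 = m + 1 := by omega
    have h3 : (3 * m + 2) / 3 = m := by omega
    rw [h1, h2, h3]; ring

end Stmt18
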